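/- Let μ, H : ℝ → ℝ be differentiable with H(s) > 0 for all s, let λ, Λ ∈ ℝ, define R = 2(μ + (1/2)λH² + Λ), and assume the conservation law μ'(s) = (μ(s) − (1/2)λH(s)² + Λ)·H'(s)/H(s) holds for all s. Then (R/H)'(s) = 0 for all s; i.e., the quantity R/H is constant along the magnetic field lines (and, since the same equation holds with the derivative along the fluid flow lines, R/H is also constant along the fluid flow lines). -/

import Mathlib

/-- with R = 2(μ + (1/2)λH² + Λ) and the conservation law
μ' = (μ − (1/2)λH² + Λ)H'/H, the quantity R/H is constant along the
magnetic field lines. -/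
theorem stmt_14 (μ H : ℝ → ℝ)
    (hμ : Differentiable ℝ μ) (hH : Differentiable ℝ H)
    (hHpos : ∀ s, 0 < H s) (lam Λ : ℝ)
    (R : ℝ → ℝ) (hR : ∀ s, R s = 2 * (μ s + (1/2) * lam * (H s)^2 + Λ))
    (hcons : ∀ s, deriv μ s = (μ s - (1/2) * lam * (H s)^2 + Λ) * (deriv H s / H s)) :
    ∀ s, deriv (fun t => R t / H t) s = 0 := by
  intro s
  have hHne : H s ≠ 0 := (hHpos s).ne'
  have hfun : (fun t => R t / H t)
      = fun t => 2 * (μ t + (1/2) * lam * (H t)^2 + Λ) / H t := by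
    funext t; rw [hR]
  have hf : HasDerivAt (fun t => 2 * (μ t + (1/2) * lam * (H t)^2 + Λ))
      (2 * (deriv μ s + (1/2) * lam * (2 * H s * deriv H s) + 0)) s := by
    have h0 := (((hμ s).hasDerivAt.add
      ((((hH s).hasDerivAt.pow 2).const_mul ((1/2) * lam)))).add
      (hasDerivAt_const s Λ)).const_mul 2
    refine h0.congr_deriv ?_
    push_cast
    ring
  have hdiv : deriv (fun t => 2 * (μ t + (1/2) * lam * (H t)^2 + Λ) / H t) s = _ := (hf.div (hH s).hasDerivAt hHne).deriv
  rw [hfun, hdiv, hcons s]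
  field_simp
  ring
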